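/- Let ε be a symmetric, integrable real random variable with a continuous positive density p_ε in a neighborhood of 0, and define T(x) := E|x + ε| − E|ε|. Then there exists a constant c₀ > 0 (one may take c₀ = p_ε(0)/2) and a neighborhood of 0 on which T(x) ≥ c₀ x². -/

import Mathlib

open MeasureTheory ProbabilityTheory Real Set

lemma abs_key (x a : ℝ) : |x + a| + |x - a| - 2 * |a| = 2 * max (|x| - |a|) 0 := by
  rcases abs_cases x with ⟨h1, h1'⟩ | ⟨h1, h1'⟩ <;> rcases abs_cases a with ⟨h2, h2'⟩ | ⟨h2, h2'⟩ <;>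
    rcases abs_cases (x + a) with ⟨h3, h3'⟩ | ⟨h3, h3'⟩ <;>
    rcases abs_cases (x - a) with ⟨h4, h4'⟩ | ⟨h4, h4'⟩ <;>
    rcases max_cases (|x| - |a|) 0 with ⟨h5, h5'⟩ | ⟨h5, h5'⟩ <;>
    simp only [h3, h4, h1, h2] at h5 h5' ⊢ <;> rw [h5] <;> linarith

/-- Let `ε` be a symmetric, integrable real random variable with a continuous positive
density `p` in a neighborhood of `0`, and define `T(x) := E|x + ε| − E|ε|`. Then there
exists a constant `c₀ > 0` (one may take `c₀ = p(0)/2`) and a neighborhood of `0` on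
which `T(x) ≥ c₀ x²`. -/
theorem stmt4 {Ω : Type*} [MeasurableSpace Ω] (P : Measure Ω) [IsProbabilityMeasure P]
    (e : Ω → ℝ) (hmeas : Measurable e) (hint : Integrable e P)
    (hsym : IdentDistrib e (fun ω => -e ω) P P)
    (p : ℝ → ℝ) (η : ℝ) (hη : 0 < η)
    (hcont : ContinuousOn p (Icc (-η) η)) (hpos : ∀ x ∈ Icc (-η) η, 0 < p x)
    (hdens : ∀ s : Set ℝ, MeasurableSet s → s ⊆ Icc (-η) η →
      P {ω | e ω ∈ s} = ENNReal.ofReal (∫ x in s, p x)) :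
    ∃ c₀ : ℝ, 0 < c₀ ∧ c₀ = p 0 / 2 ∧ ∃ η' : ℝ, 0 < η' ∧ ∀ x : ℝ, |x| ≤ η' →
      c₀ * x ^ 2 ≤ (∫ ω, |x + e ω| ∂P) - ∫ ω, |e ω| ∂P := by
  have h0mem : (0:ℝ) ∈ Icc (-η) η := ⟨by linarith, by linarith⟩
  have hp0 : 0 < p 0 := hpos 0 h0mem
  refine ⟨p 0 / 2, by linarith, rfl, ?_⟩
  have hca : ContinuousAt p 0 := hcont.continuousAt (Icc_mem_nhds (by linarith) hη)
  have hev : ∀ᶠ t in nhds (0:ℝ), 3/4 * p 0 < p t :=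
    hca.eventually (eventually_gt_nhds (by linarith))
  obtain ⟨δ, hδpos, hδ⟩ := Metric.eventually_nhds_iff.mp hev
  refine ⟨min (δ/2) η, lt_min (by linarith) hη, fun x hx => ?_⟩
  have hη'η : min (δ/2) η ≤ η := min_le_right _ _
  have hη'δ : min (δ/2) η < δ := lt_of_le_of_lt (min_le_left _ _) (by linarith)
  have hxη : |x| ≤ η := le_trans hx hη'η
  have hxδ : |x| < δ := lt_of_le_of_lt hx hη'δ
  -- key measure lower bound
  have key : ∀ a : ℝ, 0 ≤ a → a ≤ |x| →
      3/2 * p 0 * a ≤ (P {ω | |e ω| ≤ a}).toReal := by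
    intro a ha hax
    have hsub : Icc (-a) a ⊆ Icc (-η) η :=
      Icc_subset_Icc (by linarith) (le_trans hax hxη)
    have hplow : ∀ t ∈ Icc (-a) a, 3/4 * p 0 ≤ p t := by
      intro t ht
      refine le_of_lt (hδ ?_)
      rw [Real.dist_eq, sub_zero]
      have h1 : |t| ≤ a := abs_le.mpr ⟨ht.1, ht.2⟩
      calc |t| ≤ a := h1
        _ ≤ |x| := hax
        _ < δ := hxδ
    have hset : {ω | |e ω| ≤ a} = {ω | e ω ∈ Icc (-a) a} := by
      ext ω; simp [abs_le]
    rw [hset, hdens _ measurableSet_Icc hsub]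
    have hpint : IntegrableOn p (Icc (-a) a) := (hcont.mono hsub).integrableOn_Icc
    have h1 : ∫ t in Icc (-a) a, (3/4 * p 0 : ℝ) ≤ ∫ t in Icc (-a) a, p t :=
      setIntegral_mono_on (integrableOn_const measure_Icc_lt_top.ne) hpint
        measurableSet_Icc hplow
    have h2 : ∫ t in Icc (-a) a, (3/4 * p 0 : ℝ) = 2 * a * (3/4 * p 0) := by
      rw [setIntegral_const, measureReal_def, Real.volume_Icc, smul_eq_mul,
        ENNReal.toReal_ofReal (by linarith)]
      ring
    have hnn : 0 ≤ ∫ t in Icc (-a) a, p t := by nlinarith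
    rw [ENNReal.toReal_ofReal hnn]
    nlinarith
  -- rewrite T(x) as the integral of max (|x| - |e ω|) 0
  have hIe : Integrable (fun ω => |e ω|) P := hint.abs
  have hIxe : Integrable (fun ω => |x + e ω|) P := ((integrable_const x).add hint).abs
  have hIxe' : Integrable (fun ω => |x - e ω|) P := ((integrable_const x).sub hint).abs
  have hid : ∫ ω, |x + e ω| ∂P = ∫ ω, |x - e ω| ∂P := by
    have hu : Measurable fun t : ℝ => |x + t| := (measurable_const.add measurable_id).abs
    have h := (hsym.comp hu).integral_eq
    simpa [Function.comp, sub_eq_add_neg] using h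
  have hmaxint : Integrable (fun ω => max (|x| - |e ω|) 0) P :=
    ((integrable_const |x|).sub hIe).pos_part
  have hTx : (∫ ω, |x + e ω| ∂P) - ∫ ω, |e ω| ∂P = ∫ ω, max (|x| - |e ω|) 0 ∂P := by
    have h12 : Integrable (fun ω => |x + e ω| + |x - e ω|) P := hIxe.add hIxe'
    have h2e : Integrable (fun ω => 2 * |e ω|) P := hIe.const_mul 2
    have h1 : ∫ ω, (|x + e ω| + |x - e ω| - 2 * |e ω|) ∂P
        = (∫ ω, |x + e ω| ∂P) + (∫ ω, |x - e ω| ∂P) - 2 * ∫ ω, |e ω| ∂P := by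
      rw [integral_sub h12 h2e, integral_add hIxe hIxe', integral_const_mul]
    have h2 : ∫ ω, (|x + e ω| + |x - e ω| - 2 * |e ω|) ∂P
        = 2 * ∫ ω, max (|x| - |e ω|) 0 ∂P := by
      rw [← integral_const_mul]
      congr 1
      funext ω
      exact abs_key x (e ω)
    rw [h1] at h2
    linarith [hid, h2]
  -- indicator comparison
  have hA : ∀ a : ℝ, MeasurableSet {ω | |e ω| ≤ a} :=
    fun a => measurableSet_le hmeas.abs measurable_const
  have hintk : ∀ a : ℝ, Integrable (fun ω => ({ω | |e ω| ≤ a}).indicator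
      (fun _ => (1:ℝ)) ω) P := fun a => (integrable_const (1:ℝ)).indicator (hA a)
  have hlower : ∀ ω, |x|/4 * (({ω | |e ω| ≤ 1*|x|/4}).indicator (fun _ => (1:ℝ)) ω
      + ({ω | |e ω| ≤ 2*|x|/4}).indicator (fun _ => (1:ℝ)) ω
      + ({ω | |e ω| ≤ 3*|x|/4}).indicator (fun _ => (1:ℝ)) ω)
      ≤ max (|x| - |e ω|) 0 := by
    intro ω
    have h0 := abs_nonneg x
    have hm1 := le_max_left (|x| - |e ω|) 0
    have hm2 := le_max_right (|x| - |e ω|) 0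
    simp only [Set.indicator_apply, Set.mem_setOf_eq]
    split_ifs <;> linarith
  have hintegrand : Integrable (fun ω => |x|/4 * (({ω | |e ω| ≤ 1*|x|/4}).indicator
      (fun _ => (1:ℝ)) ω
      + ({ω | |e ω| ≤ 2*|x|/4}).indicator (fun _ => (1:ℝ)) ω
      + ({ω | |e ω| ≤ 3*|x|/4}).indicator (fun _ => (1:ℝ)) ω)) P :=
    (((hintk _).add (hintk _)).add (hintk _)).const_mul _
  have hmono := integral_mono hintegrand hmaxint hlower
  have hindval : ∀ a : ℝ, ∫ ω, ({ω | |e ω| ≤ a}).indicator (fun _ => (1:ℝ)) ω ∂P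
      = (P {ω | |e ω| ≤ a}).toReal := by
    intro a
    rw [integral_indicator_const (1:ℝ) (hA a), smul_eq_mul, mul_one, measureReal_def]
  have hadd12 : Integrable (fun ω => ({ω | |e ω| ≤ 1*|x|/4}).indicator (fun _ => (1:ℝ)) ω
      + ({ω | |e ω| ≤ 2*|x|/4}).indicator (fun _ => (1:ℝ)) ω) P := (hintk _).add (hintk _)
  rw [integral_const_mul, integral_add hadd12 (hintk _),
    integral_add (hintk _) (hintk _), hindval, hindval, hindval] at hmono
  have hk1 := key (1*|x|/4) (by positivity) (by linarith [abs_nonneg x])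
  have hk2 := key (2*|x|/4) (by positivity) (by linarith [abs_nonneg x])
  have hk3 := key (3*|x|/4) (by positivity) (by linarith [abs_nonneg x])
  have hxx : |x| * |x| = x^2 := by rw [← sq_abs]; ring
  rw [hTx]
  set t1 := (P {ω | |e ω| ≤ 1*|x|/4}).toReal
  set t2 := (P {ω | |e ω| ≤ 2*|x|/4}).toReal
  set t3 := (P {ω | |e ω| ≤ 3*|x|/4}).toReal
  have hsum : 9/4 * p 0 * |x| ≤ t1 + t2 + t3 := by nlinarith
  have hfinal : |x|/4 * (9/4 * p 0 * |x|) ≤ |x|/4 * (t1 + t2 + t3) :=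
    mul_le_mul_of_nonneg_left hsum (by positivity)
  have hcomp : p 0 / 2 * x^2 ≤ |x|/4 * (9/4 * p 0 * |x|) := by nlinarith [sq_nonneg x, hxx, hp0]
  linarith
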